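/- Let μ be a distribution over state-action pairs that is stationary in the sense that if (s,a) ∼ μ then the successor state s' has the same marginal state distribution as s. Suppose for some κ > 0 and all θ: γ² E_μ[max_a (φ(s,a)ᵀθ)²] − E_μ[(φ(s,a)ᵀθ)²] ≤ −κ‖θ‖², and suppose θ* satisfies F̄(θ*) = 0 where F̄(θ) = E[φ(s,a)(R(s,a) + γ max_{a'} φ(s',a')ᵀθ − φ(s,a)ᵀθ)]. Then (θ − θ*)ᵀ F̄(θ) ≤ −(κ/2)‖θ − θ*‖² for all θ ∈ ℝ^d. -/

import Mathlib

open scoped RealInnerProductSpace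

private lemma sup'_sub_abs {A : Type*} [Fintype A] [Nonempty A] (f g : A → ℝ) :
    |Finset.univ.sup' Finset.univ_nonempty f - Finset.univ.sup' Finset.univ_nonempty g|
      ≤ Finset.univ.sup' Finset.univ_nonempty (fun a => |f a - g a|) := by
  rw [abs_sub_le_iff]
  constructor
  · rw [sub_le_iff_le_add]
    apply Finset.sup'_le
    intro a _
    calc f a = (f a - g a) + g a := by ring
      _ ≤ |f a - g a| + g a := by gcongr; exact le_abs_self _
      _ ≤ _ := add_le_add (Finset.le_sup' (fun a => |f a - g a|) (Finset.mem_univ a))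
          (Finset.le_sup' g (Finset.mem_univ a))
  · rw [sub_le_iff_le_add]
    apply Finset.sup'_le
    intro a _
    calc g a = (g a - f a) + f a := by ring
      _ ≤ |f a - g a| + f a := by gcongr; rw [abs_sub_comm]; exact le_abs_self _
      _ ≤ _ := add_le_add (Finset.le_sup' (fun a => |f a - g a|) (Finset.mem_univ a))
          (Finset.le_sup' f (Finset.mem_univ a))

private lemma sup'_sq {A : Type*} [Fintype A] [Nonempty A] (f : A → ℝ) :
    Finset.univ.sup' Finset.univ_nonempty (fun a => f a ^ 2)
      = (Finset.univ.sup' Finset.univ_nonempty (fun a => |f a|)) ^ 2 := by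
  apply le_antisymm
  · apply Finset.sup'_le
    intro a _
    have h1 : |f a| ≤ Finset.univ.sup' Finset.univ_nonempty (fun a => |f a|) :=
      Finset.le_sup' (fun a => |f a|) (Finset.mem_univ a)
    rw [← sq_abs (f a)]
    exact pow_le_pow_left₀ (abs_nonneg _) h1 2
  · obtain ⟨a0, -, h0⟩ := Finset.exists_mem_eq_sup' Finset.univ_nonempty (fun a => |f a|)
    rw [h0, sq_abs]
    exact Finset.le_sup' (fun a => f a ^ 2) (Finset.mem_univ a0)

theorem stmt_15 {S A : Type*} [Fintype S] [Fintype A] [Nonempty A] {d : ℕ}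
    (φ : S → A → EuclideanSpace ℝ (Fin d)) (hφ : ∀ s a, ‖φ s a‖ ≤ 1)
    (γ : ℝ) (hγ : γ ∈ Set.Ioo (0:ℝ) 1)
    (R : S → A → ℝ)
    -- μ is a distribution over state-action pairs
    (μ : S × A → ℝ) (hμ0 : ∀ p, 0 ≤ μ p) (hμ1 : ∑ p : S × A, μ p = 1)
    -- P p s' is the probability that the successor state of the pair p is s'
    (P : S × A → S → ℝ) (hP0 : ∀ p s', 0 ≤ P p s') (hP1 : ∀ p, ∑ s' : S, P p s' = 1)
    -- stationarity: the marginal distribution of the successor state equals that of the state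
    (hstat : ∀ t : S, ∑ p : S × A, μ p * P p t = ∑ b : A, μ (t, b))
    (κ : ℝ) (hκ : 0 < κ)
    -- the drift condition on the behavior policy
    (hkey : ∀ θ : EuclideanSpace ℝ (Fin d),
      γ ^ 2 * ∑ p : S × A, μ p *
          (Finset.univ.sup' Finset.univ_nonempty (fun a : A => ⟪φ p.1 a, θ⟫ ^ 2))
        - ∑ p : S × A, μ p * ⟪φ p.1 p.2, θ⟫ ^ 2 ≤ -κ * ‖θ‖ ^ 2)
    (Fbar : EuclideanSpace ℝ (Fin d) → EuclideanSpace ℝ (Fin d))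
    (hFbar : ∀ θ, Fbar θ = ∑ p : S × A, μ p • ∑ s' : S, P p s' •
      ((R p.1 p.2
        + γ * (Finset.univ.sup' Finset.univ_nonempty (fun a' : A => ⟪φ s' a', θ⟫))
        - ⟪φ p.1 p.2, θ⟫) • φ p.1 p.2))
    (θstar : EuclideanSpace ℝ (Fin d)) (hθstar : Fbar θstar = 0) :
    ∀ θ : EuclideanSpace ℝ (Fin d),
      ⟪θ - θstar, Fbar θ⟫ ≤ -(κ / 2) * ‖θ - θstar‖ ^ 2 := by
  intro θ
  set ψ : EuclideanSpace ℝ (Fin d) := θ - θstar with hψ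
  set M : EuclideanSpace ℝ (Fin d) → S → ℝ :=
    fun v s => Finset.univ.sup' Finset.univ_nonempty (fun a' : A => ⟪φ s a', v⟫) with hM
  set N : S → ℝ :=
    fun s => Finset.univ.sup' Finset.univ_nonempty (fun a' : A => |⟪φ s a', ψ⟫|) with hN
  set a : S × A → ℝ := fun p => ⟪φ p.1 p.2, ψ⟫ with ha
  -- inner product with Fbar v
  have hinner : ∀ v : EuclideanSpace ℝ (Fin d), ⟪ψ, Fbar v⟫ =
      ∑ p : S × A, μ p * ∑ s' : S, P p s' *
        ((R p.1 p.2 + γ * M v s' - ⟪φ p.1 p.2, v⟫) * a p) := by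
    intro v
    rw [hFbar, inner_sum]
    refine Finset.sum_congr rfl fun p _ => ?_
    rw [real_inner_smul_right]
    congr 1
    rw [inner_sum]
    refine Finset.sum_congr rfl fun s' _ => ?_
    simp only [ha, hM]
    rw [real_inner_smul_right, real_inner_smul_right, real_inner_comm ψ]
  have h0 : ⟪ψ, Fbar θstar⟫ = (0:ℝ) := by rw [hθstar, inner_zero_right]
  have hmain : ⟪ψ, Fbar θ⟫ =
      ∑ p : S × A, μ p * ∑ s' : S, P p s' *
        ((γ * (M θ s' - M θstar s') - a p) * a p) := by
    rw [← sub_zero (⟪ψ, Fbar θ⟫ : ℝ), ← h0, hinner θ, hinner θstar,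
      ← Finset.sum_sub_distrib]
    refine Finset.sum_congr rfl fun p _ => ?_
    rw [← mul_sub, ← Finset.sum_sub_distrib]
    congr 1
    refine Finset.sum_congr rfl fun s' _ => ?_
    have hsub : ⟪φ p.1 p.2, θ⟫ - ⟪φ p.1 p.2, θstar⟫ = a p := by
      simp only [ha]
      rw [hψ, inner_sub_right]
    linear_combination (-(P p s' * a p)) * hsub
  -- pointwise bound
  have hterm : ∀ p : S × A, ∀ s' : S,
      (γ * (M θ s' - M θstar s') - a p) * a p ≤ γ^2 * N s'^2 / 2 - a p^2 / 2 := by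
    intro p s'
    have hΔ : |M θ s' - M θstar s'| ≤ N s' := by
      have h := sup'_sub_abs (fun a' : A => ⟪φ s' a', θ⟫) (fun a' : A => ⟪φ s' a', θstar⟫)
      have heq : (fun a' : A => |⟪φ s' a', θ⟫ - ⟪φ s' a', θstar⟫|)
          = (fun a' : A => |⟪φ s' a', ψ⟫|) := by
        funext a'
        rw [hψ, inner_sub_right]
      rw [heq] at h
      exact h
    have hN0 : 0 ≤ N s' :=
      le_trans (abs_nonneg _)
        (Finset.le_sup' (fun a' : A => |⟪φ s' a', ψ⟫|)
          (Finset.mem_univ (Classical.arbitrary A)))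
    have h1 : (M θ s' - M θstar s') * a p ≤ N s' * |a p| := by
      calc (M θ s' - M θstar s') * a p ≤ |(M θ s' - M θstar s') * a p| := le_abs_self _
        _ = |M θ s' - M θstar s'| * |a p| := abs_mul _ _
        _ ≤ N s' * |a p| := mul_le_mul_of_nonneg_right hΔ (abs_nonneg _)
    nlinarith [sq_nonneg (γ * N s' - |a p|), sq_abs (a p), hγ.1.le,
      mul_le_mul_of_nonneg_left h1 hγ.1.le]
  -- sum bound
  have hsum1 : ⟪ψ, Fbar θ⟫ ≤
      ∑ p : S × A, μ p * ∑ s' : S, P p s' * (γ^2 * N s'^2 / 2 - a p^2 / 2) := by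
    rw [hmain]
    refine Finset.sum_le_sum fun p _ => mul_le_mul_of_nonneg_left ?_ (hμ0 p)
    exact Finset.sum_le_sum fun s' _ => mul_le_mul_of_nonneg_left (hterm p s') (hP0 _ _)
  -- swap sums and use stationarity
  have eswap : ∑ p : S × A, μ p * ∑ s' : S, P p s' * (γ^2 * N s'^2 / 2)
      = ∑ p : S × A, μ p * (γ^2 * N p.1^2 / 2) := by
    calc ∑ p : S × A, μ p * ∑ s' : S, P p s' * (γ^2 * N s'^2 / 2)
        = ∑ p : S × A, ∑ s' : S, μ p * P p s' * (γ^2 * N s'^2 / 2) := by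
          refine Finset.sum_congr rfl fun p _ => ?_
          rw [Finset.mul_sum]
          exact Finset.sum_congr rfl fun s' _ => by ring
      _ = ∑ s' : S, ∑ p : S × A, μ p * P p s' * (γ^2 * N s'^2 / 2) := Finset.sum_comm
      _ = ∑ s' : S, (∑ p : S × A, μ p * P p s') * (γ^2 * N s'^2 / 2) := by
          exact Finset.sum_congr rfl fun s' _ => (Finset.sum_mul _ _ _).symm
      _ = ∑ s' : S, (∑ b : A, μ (s', b)) * (γ^2 * N s'^2 / 2) := by
          exact Finset.sum_congr rfl fun s' _ => by rw [hstat]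
      _ = ∑ s' : S, ∑ b : A, μ (s', b) * (γ^2 * N s'^2 / 2) := by
          exact Finset.sum_congr rfl fun s' _ => Finset.sum_mul _ _ _
      _ = ∑ p : S × A, μ p * (γ^2 * N p.1^2 / 2) := by
          rw [Fintype.sum_prod_type]
  -- rewrite RHS
  have hrhs : ∑ p : S × A, μ p * ∑ s' : S, P p s' * (γ^2 * N s'^2 / 2 - a p^2 / 2)
      = γ^2 / 2 * (∑ p : S × A, μ p * N p.1 ^ 2) - 1/2 * (∑ p : S × A, μ p * a p ^ 2) := by
    have e1 : ∀ p : S × A, ∑ s' : S, P p s' * (γ^2 * N s'^2 / 2 - a p^2 / 2)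
        = (∑ s' : S, P p s' * (γ^2 * N s'^2 / 2)) - a p^2 / 2 := by
      intro p
      calc ∑ s' : S, P p s' * (γ^2 * N s'^2 / 2 - a p^2 / 2)
          = ∑ s' : S, (P p s' * (γ^2 * N s'^2 / 2) - P p s' * (a p^2 / 2)) :=
            Finset.sum_congr rfl fun s' _ => by ring
        _ = (∑ s' : S, P p s' * (γ^2 * N s'^2 / 2)) - ∑ s' : S, P p s' * (a p^2 / 2) :=
            Finset.sum_sub_distrib _ _
        _ = _ := by rw [← Finset.sum_mul, hP1, one_mul]
    calc ∑ p : S × A, μ p * ∑ s' : S, P p s' * (γ^2 * N s'^2 / 2 - a p^2 / 2)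
        = ∑ p : S × A, (μ p * ∑ s' : S, P p s' * (γ^2 * N s'^2 / 2) - μ p * (a p^2 / 2)) := by
          refine Finset.sum_congr rfl fun p _ => ?_
          rw [e1]; ring
      _ = (∑ p : S × A, μ p * ∑ s' : S, P p s' * (γ^2 * N s'^2 / 2))
            - ∑ p : S × A, μ p * (a p^2 / 2) := Finset.sum_sub_distrib _ _
      _ = (∑ p : S × A, μ p * (γ^2 * N p.1^2 / 2)) - ∑ p : S × A, μ p * (a p^2 / 2) := by
          rw [eswap]
      _ = γ^2 / 2 * (∑ p : S × A, μ p * N p.1 ^ 2) - 1/2 * (∑ p : S × A, μ p * a p ^ 2) := by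
          rw [Finset.mul_sum, Finset.mul_sum]
          congr 1 <;> exact Finset.sum_congr rfl fun p _ => by ring
  -- the key hypothesis
  have hk := hkey ψ
  have hsup : ∑ p : S × A, μ p *
      (Finset.univ.sup' Finset.univ_nonempty (fun a' : A => ⟪φ p.1 a', ψ⟫ ^ 2))
      = ∑ p : S × A, μ p * N p.1 ^ 2 := by
    refine Finset.sum_congr rfl fun p _ => ?_
    rw [sup'_sq (fun a' : A => ⟪φ p.1 a', ψ⟫)]
  rw [hsup] at hk
  rw [hrhs] at hsum1
  have hak : ∑ p : S × A, μ p * ⟪φ p.1 p.2, ψ⟫ ^ 2 = ∑ p : S × A, μ p * a p ^ 2 := rfl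
  rw [hak] at hk
  nlinarith [hsum1, hk]
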